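/- For every n ≥ 3, the transition graph of any player-specific congestion game on a circle with n players in which every player is of type 3 contains a directed cycle; in particular, the best response dynamics on circles can cycle. -/

import Mathlib

open scoped ENNReal NNReal

/-- A player-specific singleton congestion game on a circle with `n` players:
the resources are `0, …, n-1`, and player `i` chooses between resource `i`
(its 0-strategy, with delay function `d0 i`) and resource `i+1 (mod n)`
(its 1-strategy, with delay function `d1 i`). The delay functions are strictly
increasing and ties are broken (for each player the delays of its two resources
at congestions `1 ≤ k ≤ n` are pairwise distinct). -/
structure CircleGame (n : ℕ) where
  d0 : Fin n → ℕ → ℕ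
  d1 : Fin n → ℕ → ℕ
  mono0 : ∀ i, StrictMono (d0 i)
  mono1 : ∀ i, StrictMono (d1 i)
  tie : ∀ i : Fin n, ∀ k, 1 ≤ k → k ≤ n → ∀ k', 1 ≤ k' → k' ≤ n → d0 i k ≠ d1 i k'

namespace CircleGame

variable {n : ℕ} [NeZero n]

/-- A state is a function `s : Fin n → Bool`: `s i = false` iff player `i` plays its
0-strategy (resource `i`), and `s i = true` iff it plays its 1-strategy (resource `i+1`).
`cong s r` is the congestion of resource `r`: resource `r` is allocated by player `r`
(if it plays its 0-strategy) and by player `r-1` (if it plays its 1-strategy). -/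
def cong (s : Fin n → Bool) (r : Fin n) : ℕ :=
  (if s r = false then 1 else 0) + (if s (r - 1) = true then 1 else 0)

/-- The current resource of player `i` is a best response to state `s`. -/
def CurrentBR (G : CircleGame n) (s : Fin n → Bool) (i : Fin n) : Prop :=
  if s i = false then G.d0 i (cong s i) ≤ G.d1 i (cong s (i + 1) + 1)
  else G.d1 i (cong s (i + 1)) ≤ G.d0 i (cong s i + 1)

/-- One best-response step: a player whose current resource is not a best response
switches to its (unique) other resource, which is then its best response. -/
def Step (G : CircleGame n) (s s' : Fin n → Bool) : Prop :=
  ∃ i, ¬ G.CurrentBR s i ∧ s' = Function.update s i (!(s i))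

/-- Nash equilibrium: every player's current resource is a best response. -/
def IsNash (G : CircleGame n) (s : Fin n → Bool) : Prop := ∀ i, G.CurrentBR s i

/-- type 1 : `d_{r_i}(1) < d_{r_i}(2) < d_{r_{i+1}}(1) < d_{r_{i+1}}(2)`. -/
def IsType1 (G : CircleGame n) (i : Fin n) : Prop :=
  G.d0 i 1 < G.d0 i 2 ∧ G.d0 i 2 < G.d1 i 1 ∧ G.d1 i 1 < G.d1 i 2

/-- type 1' : roles of the two resources exchanged. -/
def IsType1' (G : CircleGame n) (i : Fin n) : Prop :=
  G.d1 i 1 < G.d1 i 2 ∧ G.d1 i 2 < G.d0 i 1 ∧ G.d0 i 1 < G.d0 i 2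

/-- type 2 : `d_{r_i}(1) < d_{r_{i+1}}(1) < d_{r_i}(2) < d_{r_{i+1}}(2)`. -/
def IsType2 (G : CircleGame n) (i : Fin n) : Prop :=
  G.d0 i 1 < G.d1 i 1 ∧ G.d1 i 1 < G.d0 i 2 ∧ G.d0 i 2 < G.d1 i 2

/-- type 2' : roles of the two resources exchanged. -/
def IsType2' (G : CircleGame n) (i : Fin n) : Prop :=
  G.d1 i 1 < G.d0 i 1 ∧ G.d0 i 1 < G.d1 i 2 ∧ G.d1 i 2 < G.d0 i 2

/-- type 3 : `d_{r_i}(1) < d_{r_{i+1}}(1) < d_{r_{i+1}}(2) < d_{r_i}(2)`. -/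
def IsType3 (G : CircleGame n) (i : Fin n) : Prop :=
  G.d0 i 1 < G.d1 i 1 ∧ G.d1 i 1 < G.d1 i 2 ∧ G.d1 i 2 < G.d0 i 2

/-- type 3' : roles of the two resources exchanged. -/
def IsType3' (G : CircleGame n) (i : Fin n) : Prop :=
  G.d1 i 1 < G.d0 i 1 ∧ G.d0 i 1 < G.d0 i 2 ∧ G.d0 i 2 < G.d1 i 2

/-- Resource `r_i` is a termination point for overload tokens: the pair of types of
players `i-1` and `i` is one of `(2',2), (3,3'), (3,2), (2',3')`. -/
def OverloadTP (G : CircleGame n) (i : Fin n) : Prop :=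
  (G.IsType2' (i - 1) ∧ G.IsType2 i) ∨ (G.IsType3 (i - 1) ∧ G.IsType3' i) ∨
  (G.IsType3 (i - 1) ∧ G.IsType2 i) ∨ (G.IsType2' (i - 1) ∧ G.IsType3' i)

/-- Resource `r_i` is a termination point for underload tokens: the pair of types of
players `i-1` and `i` is one of `(2,2'), (3,3'), (2,3'), (3,2')`. -/
def UnderloadTP (G : CircleGame n) (i : Fin n) : Prop :=
  (G.IsType2 (i - 1) ∧ G.IsType2' i) ∨ (G.IsType3 (i - 1) ∧ G.IsType3' i) ∨
  (G.IsType2 (i - 1) ∧ G.IsType3' i) ∨ (G.IsType3 (i - 1) ∧ G.IsType2' i)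

open scoped Classical in
/-- The set of players whose current resource is not a best response. -/
noncomputable def unsat (G : CircleGame n) (s : Fin n → Bool) : Finset (Fin n) :=
  Finset.univ.filter fun i => ¬ G.CurrentBR s i

/-- One step of the random best response dynamics: in a state that is not a Nash
equilibrium, a player whose current resource is not a best response is selected
uniformly at random and switches to its best response; Nash equilibria are absorbing. -/
noncomputable def stepPMF (G : CircleGame n) (s : Fin n → Bool) : PMF (Fin n → Bool) :=
  if h : (G.unsat s).Nonempty then
    (PMF.uniformOfFinset (G.unsat s) h).bind fun i => PMF.pure (Function.update s i (!(s i)))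
  else PMF.pure s

/-- The distribution of the random best response dynamics after `t` steps, started in `s`. -/
noncomputable def walk (G : CircleGame n) (s : Fin n → Bool) : ℕ → PMF (Fin n → Bool)
  | 0 => PMF.pure s
  | t + 1 => (walk G s t).bind G.stepPMF

open scoped Classical in
/-- The expected number of steps until the random best response dynamics started in `s`
reaches a Nash equilibrium: since Nash equilibria are absorbing, this is
`∑_{t ≥ 0} Pr[X_t is not a Nash equilibrium]`. -/
noncomputable def expTime (G : CircleGame n) (s : Fin n → Bool) : ℝ≥0∞ :=
  ∑' t : ℕ, ∑ s' ∈ Finset.univ.filter (fun s' => ¬ G.IsNash s'), G.walk s t s'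

end CircleGame

namespace CircleAux

variable {n : ℕ} [NeZero n]

/-- State with exactly player `i` playing its 1-strategy. -/
def st (i : Fin n) : Fin n → Bool := fun j => decide (j = i)

/-- State with players `i` and `i+1` playing their 1-strategies. -/
def mid (i : Fin n) : Fin n → Bool := fun j => decide (j = i) || decide (j = i + 1)

theorem mod2 (x n : ℕ) (h : x < 2 * n) (_h0 : 0 < n) :
    x % n = if x < n then x else x - n := by
  split
  · exact Nat.mod_eq_of_lt ‹_›
  · rw [Nat.mod_eq_sub_mod (le_of_not_gt ‹_›), Nat.mod_eq_of_lt (by omega)]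

theorem twoStep (hn : 3 ≤ n) (G : CircleGame n) (h3 : ∀ i, G.IsType3 i) (i : Fin n) :
    Relation.TransGen G.Step (st i) (st (i + 1)) := by
  have hne1 : ∀ j : Fin n, j + 1 ≠ j := by
    intro j h
    have := congrArg Fin.val h
    have hj := j.isLt
    rw [Fin.add_def] at this
    simp [Fin.val_one'] at this
    rw [mod2 _ _ (by omega) (by omega)] at this
    split_ifs at this <;> omega
  have hne2 : ∀ j : Fin n, j + 1 + 1 ≠ j := by
    intro j h
    have := congrArg Fin.val h
    have hj := j.isLt
    rw [Fin.add_def, Fin.add_def] at this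
    simp [Fin.val_one'] at this
    rw [mod2 _ _ (by omega) (by omega)] at this
    split_ifs at this <;> omega
  have hm1 : i - 1 ≠ i := by
    intro h
    have := congrArg Fin.val h
    have hj := i.isLt
    rw [Fin.sub_def] at this
    simp [Fin.val_one'] at this
    rw [Nat.mod_eq_of_lt (show 1 < n by omega), mod2 _ _ (by omega) (by omega)] at this
    split_ifs at this <;> omega
  have hm2 : i - 1 ≠ i + 1 := by
    intro h
    have := congrArg Fin.val h
    have hj := i.isLt
    rw [Fin.sub_def, Fin.add_def] at this
    simp [Fin.val_one'] at this
    rw [Nat.mod_eq_of_lt (show 1 < n by omega), mod2 _ _ (by omega) (by omega),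
      mod2 (↑i + 1) _ (by omega) (by omega)] at this
    split_ifs at this <;> omega
  -- step A : player i+1 switches from false to true
  have hfalse : st i (i + 1) = false := by simp [st, hne1 i]
  have c1 : CircleGame.cong (st i) (i + 1) = 2 := by
    simp [CircleGame.cong, st, add_sub_cancel_right, hne1 i]
  have c2 : CircleGame.cong (st i) (i + 1 + 1) = 1 := by
    have h1 : i + 1 + 1 ≠ i := hne2 i
    have h2 : i + 1 + 1 - 1 ≠ i := by rw [add_sub_cancel_right]; exact hne1 i
    simp [CircleGame.cong, st, h1, h2]
    omega
  have stepA : G.Step (st i) (mid i) := by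
    refine ⟨i + 1, ?_, ?_⟩
    · rw [CircleGame.CurrentBR, if_pos hfalse, c1, c2]
      exact not_le.mpr ((h3 (i + 1)).2.2)
    · funext j
      rcases eq_or_ne j (i + 1) with h | h
      · subst h
        rw [Function.update_self, hfalse]
        simp [mid]
      · rw [Function.update_of_ne h]
        simp [mid, st, h]
  -- step B : player i switches from true to false
  have htrue : mid i i = true := by simp [mid]
  have d1 : CircleGame.cong (mid i) (i + 1) = 1 := by
    simp [CircleGame.cong, mid, add_sub_cancel_right]
  have d0 : CircleGame.cong (mid i) i = 0 := by
    simp [CircleGame.cong, mid, hm1, hm2]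
  have stepB : G.Step (mid i) (st (i + 1)) := by
    refine ⟨i, ?_, ?_⟩
    · rw [CircleGame.CurrentBR, if_neg (by simp [htrue]), d1, d0]
      exact not_le.mpr ((h3 i).1)
    · funext j
      rcases eq_or_ne j i with h | h
      · subst h
        rw [Function.update_self, htrue]
        simp [st, (hne1 j).symm]
      · rw [Function.update_of_ne h]
        simp [mid, st, h]
  exact (Relation.TransGen.single stepA).tail stepB

end CircleAux

open Fin.NatCast in
/-- For every `n ≥ 3`, the transition graph of any player-specific
congestion game on a circle with `n` players in which every player is of type 3
contains a directed cycle. -/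
theorem circle_type3_transition_graph_has_cycle
    (n : ℕ) [NeZero n] (hn : 3 ≤ n) (G : CircleGame n)
    (h3 : ∀ i, G.IsType3 i) :
    ∃ s : Fin n → Bool, Relation.TransGen G.Step s s := by
  refine ⟨CircleAux.st 0, ?_⟩
  have key : ∀ k : ℕ, Relation.TransGen G.Step (CircleAux.st (0 : Fin n))
      (CircleAux.st (((k + 1 : ℕ) : Fin n))) := by
    intro k
    induction k with
    | zero =>
      have := CircleAux.twoStep hn G h3 0
      simpa using this
    | succ k ih =>
      have h2 := CircleAux.twoStep hn G h3 (((k + 1 : ℕ) : Fin n))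
      have hcast : ((k + 1 + 1 : ℕ) : Fin n) = ((k + 1 : ℕ) : Fin n) + 1 := by
        push_cast; ring
      rw [hcast]
      exact ih.trans h2
  have := key (n - 1)
  rw [Nat.sub_add_cancel (by omega : 1 ≤ n)] at this
  simpa [Fin.natCast_self] using this
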